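/- Let r ∈ ℚ and let G, F, A, B, H, J be formal power series in ℚ⟦z⟧, each with constant coefficient 1 (hence units), such that: the coefficients of z¹ and z² in G are 1 and 1 − r²; the coefficients of z¹ and z² in F are 0 and (r⁴ − r²)/2; the coefficients of z¹ and z² in A are 0 and −(r³ − r)/6; the coefficients of z¹ and z² in B are 0 and (r² − r⁴)/24; and H² = F, J² = A. Then for all integers χ, s, κ, the coefficient of z² in the power series G^χ · H · A^s · J^{−κ} · B^κ (integer powers of units) equals χ(χ−1)/2 − (r² − 1)χ − ((r³ − r)/6)·s − ((r⁴ − 2r³ − r² + 2r)/24)·κ + (r⁴ − r²)/4. -/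

import Mathlib

open PowerSeries


private lemma c1_mul (f g : PowerSeries ℚ) :
    coeff 1 (f * g) = constantCoeff f * coeff 1 g + coeff 1 f * constantCoeff g := by
  rw [coeff_mul]
  simp [Finset.Nat.sum_antidiagonal_eq_sum_range_succ_mk, Finset.sum_range_succ,
    coeff_zero_eq_constantCoeff]

private lemma c2_mul (f g : PowerSeries ℚ) :
    coeff 2 (f * g) = constantCoeff f * coeff 2 g + coeff 1 f * coeff 1 g
      + coeff 2 f * constantCoeff g := by
  rw [coeff_mul]
  simp [Finset.Nat.sum_antidiagonal_eq_sum_range_succ_mk, Finset.sum_range_succ,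
    coeff_zero_eq_constantCoeff]

private lemma pow_coeffs (f : PowerSeries ℚ) (a b : ℚ)
    (h0 : constantCoeff f = 1) (h1 : coeff 1 f = a) (h2 : coeff 2 f = b) (m : ℕ) :
    constantCoeff (f ^ m) = 1 ∧ coeff 1 (f ^ m) = m * a ∧
      coeff 2 (f ^ m) = m * b + m * (m - 1) / 2 * a ^ 2 := by
  induction m with
  | zero => simp
  | succ n ih =>
    obtain ⟨i0, i1, i2⟩ := ih
    refine ⟨by rw [pow_succ, map_mul, i0, h0, mul_one], ?_, ?_⟩
    · rw [pow_succ, c1_mul, i0, i1, h0, h1]; push_cast; ring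
    · rw [pow_succ, c2_mul, i0, i1, i2, h0, h1, h2]; push_cast; ring

private lemma inv_coeffs (U : (PowerSeries ℚ)ˣ) (a b : ℚ)
    (h0 : constantCoeff (U : PowerSeries ℚ) = 1)
    (h1 : coeff 1 (U : PowerSeries ℚ) = a) (h2 : coeff 2 (U : PowerSeries ℚ) = b) :
    constantCoeff ((U⁻¹ : (PowerSeries ℚ)ˣ) : PowerSeries ℚ) = 1 ∧
      coeff 1 ((U⁻¹ : (PowerSeries ℚ)ˣ) : PowerSeries ℚ) = -a ∧
      coeff 2 ((U⁻¹ : (PowerSeries ℚ)ˣ) : PowerSeries ℚ) = a ^ 2 - b := by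
  have hmul : (U : PowerSeries ℚ) * ((U⁻¹ : (PowerSeries ℚ)ˣ) : PowerSeries ℚ) = 1 := by
    rw [← Units.val_mul, mul_inv_cancel, Units.val_one]
  have e0 : constantCoeff ((U⁻¹ : (PowerSeries ℚ)ˣ) : PowerSeries ℚ) = 1 := by
    have := congrArg (constantCoeff) hmul
    rw [map_mul, h0, one_mul, map_one] at this; exact this
  refine ⟨e0, ?_, ?_⟩
  · have := congrArg (coeff 1) hmul
    rw [c1_mul, h0, h1, e0, one_mul, mul_one] at this
    simp at this; linarith
  · have e1 : coeff 1 ((U⁻¹ : (PowerSeries ℚ)ˣ) : PowerSeries ℚ) = -a := by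
      have := congrArg (coeff 1) hmul
      rw [c1_mul, h0, h1, e0, one_mul, mul_one] at this
      simp at this; linarith
    have := congrArg (coeff 2) hmul
    rw [c2_mul, h0, h1, h2, e0, e1, one_mul, mul_one] at this
    simp at this; linarith

private lemma zpow_coeffs (U : (PowerSeries ℚ)ˣ) (a b : ℚ)
    (h0 : constantCoeff (U : PowerSeries ℚ) = 1)
    (h1 : coeff 1 (U : PowerSeries ℚ) = a) (h2 : coeff 2 (U : PowerSeries ℚ) = b) (n : ℤ) :
    constantCoeff ((U ^ n : (PowerSeries ℚ)ˣ) : PowerSeries ℚ) = 1 ∧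
      coeff 1 ((U ^ n : (PowerSeries ℚ)ˣ) : PowerSeries ℚ) = n * a ∧
      coeff 2 ((U ^ n : (PowerSeries ℚ)ˣ) : PowerSeries ℚ)
        = n * b + n * (n - 1) / 2 * a ^ 2 := by
  obtain ⟨m, rfl | rfl⟩ := n.eq_nat_or_neg
  · have key : ((U ^ (m : ℤ) : (PowerSeries ℚ)ˣ) : PowerSeries ℚ) = (U : PowerSeries ℚ) ^ m := by
      rw [zpow_natCast, Units.val_pow_eq_pow_val]
    rw [key]
    obtain ⟨p0, p1, p2⟩ := pow_coeffs (U : PowerSeries ℚ) a b h0 h1 h2 m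
    exact ⟨p0, by rw [p1]; push_cast; ring, by rw [p2]; push_cast; ring⟩
  · have key : (U ^ (-(m : ℤ)) : (PowerSeries ℚ)ˣ) = ((U ^ m)⁻¹ : (PowerSeries ℚ)ˣ) := by
      rw [zpow_neg, zpow_natCast]
    rw [key]
    have hp : ((U ^ m : (PowerSeries ℚ)ˣ) : PowerSeries ℚ) = (U : PowerSeries ℚ) ^ m :=
      Units.val_pow_eq_pow_val U m
    obtain ⟨p0, p1, p2⟩ := pow_coeffs (U : PowerSeries ℚ) a b h0 h1 h2 m
    rw [← hp] at p0 p1 p2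
    obtain ⟨q0, q1, q2⟩ := inv_coeffs (U ^ m) _ _ p0 p1 p2
    refine ⟨q0, by rw [q1]; push_cast; ring, by rw [q2]; push_cast; ring⟩

/-- Extraction of the n = 2 Euler characteristic formula from the Ellingsrud–Göttsche–Lehn
generating series: if `G, F, A, B, H, J` are unit power series over `ℚ` with constant
coefficient 1, with the prescribed coefficients of `z¹` and `z²`, and with `H² = F`, `J² = A`,
then for all integers `χ, s, κ` the coefficient of `z²` in `G^χ · H · A^s · J^(−κ) · B^κ` is
`χ(χ−1)/2 − (r²−1)χ − ((r³−r)/6)s − ((r⁴−2r³−r²+2r)/24)κ + (r⁴−r²)/4`. -/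
theorem stmt_8 (r : ℚ) (G F A B H J : (PowerSeries ℚ)ˣ)
    (hG0 : constantCoeff (G : PowerSeries ℚ) = 1)
    (hF0 : constantCoeff (F : PowerSeries ℚ) = 1)
    (hA0 : constantCoeff (A : PowerSeries ℚ) = 1)
    (hB0 : constantCoeff (B : PowerSeries ℚ) = 1)
    (hH0 : constantCoeff (H : PowerSeries ℚ) = 1)
    (hJ0 : constantCoeff (J : PowerSeries ℚ) = 1)
    (hG1 : coeff 1 (G : PowerSeries ℚ) = 1)
    (hG2 : coeff 2 (G : PowerSeries ℚ) = 1 - r ^ 2)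
    (hF1 : coeff 1 (F : PowerSeries ℚ) = 0)
    (hF2 : coeff 2 (F : PowerSeries ℚ) = (r ^ 4 - r ^ 2) / 2)
    (hA1 : coeff 1 (A : PowerSeries ℚ) = 0)
    (hA2 : coeff 2 (A : PowerSeries ℚ) = -(r ^ 3 - r) / 6)
    (hB1 : coeff 1 (B : PowerSeries ℚ) = 0)
    (hB2 : coeff 2 (B : PowerSeries ℚ) = (r ^ 2 - r ^ 4) / 24)
    (hH : H ^ 2 = F) (hJ : J ^ 2 = A)
    (χ s κ : ℤ) :
    coeff 2 ((G ^ χ * H * A ^ s * J ^ (-κ) * B ^ κ : (PowerSeries ℚ)ˣ) : PowerSeries ℚ)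
      = (χ : ℚ) * ((χ : ℚ) - 1) / 2 - (r ^ 2 - 1) * (χ : ℚ) - ((r ^ 3 - r) / 6) * (s : ℚ)
        - ((r ^ 4 - 2 * r ^ 3 - r ^ 2 + 2 * r) / 24) * (κ : ℚ) + (r ^ 4 - r ^ 2) / 4 := by
  -- coefficients of H from H^2 = F
  have hHval : (H : PowerSeries ℚ) * (H : PowerSeries ℚ) = (F : PowerSeries ℚ) := by
    rw [← Units.val_mul, ← sq, hH]
  have hH1 : coeff 1 (H : PowerSeries ℚ) = 0 := by
    have := congrArg (coeff 1) hHval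
    rw [c1_mul, hH0, hF1] at this; linarith
  have hH2 : coeff 2 (H : PowerSeries ℚ) = (r ^ 4 - r ^ 2) / 4 := by
    have := congrArg (coeff 2) hHval
    rw [c2_mul, hH0, hH1, hF2] at this; linarith
  -- coefficients of J from J^2 = A
  have hJval : (J : PowerSeries ℚ) * (J : PowerSeries ℚ) = (A : PowerSeries ℚ) := by
    rw [← Units.val_mul, ← sq, hJ]
  have hJ1 : coeff 1 (J : PowerSeries ℚ) = 0 := by
    have := congrArg (coeff 1) hJval
    rw [c1_mul, hJ0, hA1] at this; linarith
  have hJ2 : coeff 2 (J : PowerSeries ℚ) = -(r ^ 3 - r) / 12 := by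
    have := congrArg (coeff 2) hJval
    rw [c2_mul, hJ0, hJ1, hA2] at this; linarith
  obtain ⟨g0, g1, g2⟩ := zpow_coeffs G _ _ hG0 hG1 hG2 χ
  obtain ⟨a0, a1, a2⟩ := zpow_coeffs A _ _ hA0 hA1 hA2 s
  obtain ⟨j0, j1, j2⟩ := zpow_coeffs J _ _ hJ0 hJ1 hJ2 (-κ)
  obtain ⟨b0, b1, b2⟩ := zpow_coeffs B _ _ hB0 hB1 hB2 κ
  rw [Units.val_mul, Units.val_mul, Units.val_mul, Units.val_mul]
  rw [c2_mul, c1_mul, c1_mul, c1_mul, c2_mul, c2_mul, c2_mul]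
  rw [map_mul, map_mul, map_mul]
  rw [g0, g1, g2, a0, a1, a2, j0, j1, j2, b0, b1, b2, hH0, hH1, hH2]
  push_cast
  ring
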